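/- Let $G$ be a topological group acting continuously on a topological space $X$, let $\Gamma \leq G$ be a subgroup, and let $p \in X$ be a point whose $G$-orbit map $g \mapsto g \cdot p$ is continuous and whose orbit $\Gamma \cdot p$ is discrete and closed in $X$. Suppose $H = \mathrm{Stab}_G(p)$. Then the map $\rho \colon G/(H \cap \Gamma) \to (G/\Gamma) \times X$ defined by $\rho(g(H\cap\Gamma)) = (g\Gamma, g \cdot p)$ is a proper map, provided $G/\Gamma$ has the quotient topology, $(\mathrm{N}_G(H) \cap \Gamma)/(H \cap \Gamma)$ is finite, and the orbit map $G/H \to G\cdot p$ is proper. -/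

import Mathlib

open Filter Topology

/-- Abstract properness statement behind Proposition 4.8: if `p ∈ X` has discrete and
closed `Γ`-orbit, `H = Stab_G(p)`, `(N_G(H) ⊓ Γ)/(H ⊓ Γ)` is finite, and the orbit map
`G/H → G·p` is proper, then `ρ : G/(H ⊓ Γ) → (G/Γ) × X`, `g ↦ (gΓ, g·p)`, is proper. -/
theorem quotient_graph_map_proper
    (G : Type*) [Group G] [TopologicalSpace G] [IsTopologicalGroup G]
    (X : Type*) [TopologicalSpace X]
    [MulAction G X] [ContinuousSMul G X]
    (Γ : Subgroup G) (p : X)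
    (hclosed : IsClosed (Set.range fun γ : Γ => (γ : G) • p))
    (hdisc : DiscreteTopology (Set.range fun γ : Γ => (γ : G) • p))
    (hfin : Finite ((Subgroup.normalizer (MulAction.stabilizer G p : Set G) ⊓ Γ : Subgroup G)
      ⧸ ((MulAction.stabilizer G p ⊓ Γ).subgroupOf
          (Subgroup.normalizer (MulAction.stabilizer G p : Set G) ⊓ Γ))))
    (horbit : IsProperMap (fun q : G ⧸ MulAction.stabilizer G p =>
      ((MulAction.orbitEquivQuotientStabilizer G p).symm q : X)))
    (ρ : G ⧸ (MulAction.stabilizer G p ⊓ Γ) → (G ⧸ Γ) × X)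
    (hρ : ∀ g : G, ρ (QuotientGroup.mk g) = (QuotientGroup.mk g, g • p)) :
    IsProperMap ρ := by
  classical
  set S : Set X := Set.range (fun γ : Γ => (γ : G) • p) with hSdef
  rw [isProperMap_iff_ultrafilter]
  constructor
  · -- continuity
    have hq : IsQuotientMap
        (QuotientGroup.mk : G → G ⧸ (MulAction.stabilizer G p ⊓ Γ)) :=
      isQuotientMap_quotient_mk'
    rw [hq.continuous_iff]
    have hfun : (ρ ∘ (QuotientGroup.mk : G → G ⧸ (MulAction.stabilizer G p ⊓ Γ)))
        = fun g : G => ((QuotientGroup.mk g : G ⧸ Γ), g • p) := by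
      funext g; simp [hρ]
    rw [hfun]
    exact continuous_quotient_mk'.prodMk (continuous_id.smul continuous_const)
  · intro 𝒰 y hy
    obtain ⟨a, ha⟩ := QuotientGroup.mk_surjective y.1
    set π₀ : G → G ⧸ (MulAction.stabilizer G p ⊓ Γ) := QuotientGroup.mk with hπ₀
    set m : G × Γ → G := fun z => z.1 * (z.2 : G) with hm
    set ℱ : Filter (G × Γ) :=
      (𝒰 : Filter _).comap (fun z : G × Γ => π₀ z.1) ⊓ (𝓝 a).comap m with hℱ
    have hy1 : Tendsto (fun q => (ρ q).1) 𝒰 (𝓝 y.1) := (continuous_fst.tendsto y).comp hy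
    have hy2 : Tendsto (fun q => (ρ q).2) 𝒰 (𝓝 y.2) := (continuous_snd.tendsto y).comp hy
    have hne : ℱ.NeBot := by
      rw [← Filter.forall_mem_nonempty_iff_neBot]
      intro s hs
      rw [hℱ, Filter.mem_inf_iff] at hs
      obtain ⟨t₁, ht₁, t₂, ht₂, rfl⟩ := hs
      rw [Filter.mem_comap] at ht₁ ht₂
      obtain ⟨U, hU, hU'⟩ := ht₁
      obtain ⟨V, hV, hV'⟩ := ht₂
      have hopen : IsOpenMap (QuotientGroup.mk : G → G ⧸ Γ) := QuotientGroup.isOpenMap_coe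
      have hVnhds : ((QuotientGroup.mk : G → G ⧸ Γ) '' V) ∈ 𝓝 y.1 := by
        rw [← ha]; exact hopen.image_mem_nhds hV
      have hmem : (fun q => (ρ q).1) ⁻¹' ((QuotientGroup.mk : G → G ⧸ Γ) '' V) ∈ 𝒰 :=
        hy1 hVnhds
      obtain ⟨q, hqU, hqV⟩ :=
        Ultrafilter.nonempty_of_mem (Filter.inter_mem hU hmem)
      obtain ⟨g, rfl⟩ := QuotientGroup.mk_surjective q
      simp only [Set.mem_preimage, hρ] at hqV
      obtain ⟨v, hvV, hv⟩ := hqV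
      have hγ : g⁻¹ * v ∈ Γ := by
        have h' : (QuotientGroup.mk g : G ⧸ Γ) = QuotientGroup.mk v := by
          exact (hv.trans (congrArg Prod.fst (hρ g))).symm
        exact QuotientGroup.eq.mp h'
      refine ⟨(g, ⟨g⁻¹ * v, hγ⟩), hU' ?_, hV' ?_⟩
      · exact hqU
      · show m (g, ⟨g⁻¹ * v, hγ⟩) ∈ V
        have : m (g, ⟨g⁻¹ * v, hγ⟩) = v := by
          show g * (g⁻¹ * v) = v
          rw [mul_inv_cancel_left]
        rwa [this]
    haveI := hne
    set 𝒲 : Ultrafilter (G × Γ) := Ultrafilter.of ℱ with h𝒲def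
    have h𝒲 : (𝒲 : Filter (G × Γ)) ≤ ℱ := Ultrafilter.of_le ℱ
    have hW1 : Tendsto (fun z : G × Γ => π₀ z.1) 𝒲 𝒰 :=
      Filter.tendsto_iff_comap.mpr (h𝒲.trans inf_le_left)
    have hWm : Tendsto m 𝒲 (𝓝 a) :=
      Filter.tendsto_iff_comap.mpr (h𝒲.trans inf_le_right)
    have hsnd : Tendsto (fun z : G × Γ => z.1 • p) 𝒲 (𝓝 y.2) := by
      have h := hy2.comp hW1
      refine h.congr fun z => ?_
      show (ρ (π₀ z.1)).2 = z.1 • p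
      rw [hπ₀]
      rw [hρ]
    have hγp : Tendsto (fun z : G × Γ => ((z.2 : G))⁻¹ • p) 𝒲 (𝓝 (a⁻¹ • y.2)) := by
      have h := (hWm.inv).smul hsnd
      refine h.congr fun z => ?_
      show (m z)⁻¹ • z.1 • p = (z.2 : G)⁻¹ • p
      have hmz : m z = z.1 * (z.2 : G) := rfl
      rw [hmz, smul_smul, mul_inv_rev, inv_mul_cancel_right]
    have hmemorbit : a⁻¹ • y.2 ∈ S := by
      refine hclosed.mem_of_tendsto hγp (Filter.Eventually.of_forall fun z => ?_)
      exact ⟨z.2⁻¹, by simp⟩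
    obtain ⟨γ₁, hγ₁⟩ := hmemorbit
    have hγ₁' : (γ₁ : G) • p = a⁻¹ • y.2 := hγ₁
    have hxS : ((γ₁ : G) • p) ∈ S := ⟨γ₁, rfl⟩
    obtain ⟨V, hVopen, hVeq⟩ : ∃ V : Set X, IsOpen V ∧ V ∩ S = {(γ₁ : G) • p} := by
      have hsing : IsOpen ({⟨(γ₁ : G) • p, hxS⟩} : Set S) := isOpen_discrete _
      rw [isOpen_induced_iff] at hsing
      obtain ⟨V, hV, hVpre⟩ := hsing
      refine ⟨V, hV, ?_⟩
      ext w
      constructor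
      · rintro ⟨hw1, hw2⟩
        have h' : (⟨w, hw2⟩ : S) ∈ (Subtype.val ⁻¹' V : Set S) := hw1
        rw [hVpre] at h'
        simpa using congrArg Subtype.val h'
      · rintro (rfl : w = (γ₁ : G) • p)
        have h' : (⟨(γ₁ : G) • p, hxS⟩ : S) ∈ (Subtype.val ⁻¹' V : Set S) := by
          rw [hVpre]; rfl
        exact ⟨h', hxS⟩
    have hxV : (γ₁ : G) • p ∈ V := by
      have h : (γ₁ : G) • p ∈ V ∩ S := by rw [hVeq]; rfl
      exact h.1
    have hevV : ∀ᶠ z in (𝒲 : Filter (G × Γ)), (z.2 : G)⁻¹ • p ∈ V := by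
      apply hγp
      rw [← hγ₁']
      exact hVopen.mem_nhds hxV
    have heveq : ∀ᶠ z in (𝒲 : Filter (G × Γ)), (z.2 : G)⁻¹ • p = (γ₁ : G) • p := by
      filter_upwards [hevV] with z hz
      have h : (z.2 : G)⁻¹ • p ∈ V ∩ S := ⟨hz, ⟨z.2⁻¹, by simp⟩⟩
      rwa [hVeq, Set.mem_singleton_iff] at h
    have heq : ∀ᶠ z in (𝒲 : Filter (G × Γ)),
        π₀ z.1 = QuotientGroup.mk (m z * (γ₁ : G)) := by
      filter_upwards [heveq] with z hz
      show (QuotientGroup.mk z.1 : G ⧸ (MulAction.stabilizer G p ⊓ Γ))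
        = QuotientGroup.mk (z.1 * (z.2 : G) * (γ₁ : G))
      refine QuotientGroup.eq.mpr ?_
      have hmemH : ((z.2 : G) * (γ₁ : G)) ∈ MulAction.stabilizer G p := by
        rw [MulAction.mem_stabilizer_iff, mul_smul, ← hz, smul_inv_smul]
      have hmemΓ : ((z.2 : G) * (γ₁ : G)) ∈ Γ := Γ.mul_mem z.2.2 γ₁.2
      have hmem : ((z.2 : G) * (γ₁ : G)) ∈ MulAction.stabilizer G p ⊓ Γ := ⟨hmemH, hmemΓ⟩
      simpa [mul_assoc, inv_mul_cancel_left] using hmem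
    have hq' : Tendsto
        (fun z : G × Γ =>
          (QuotientGroup.mk (m z * (γ₁ : G)) : G ⧸ (MulAction.stabilizer G p ⊓ Γ)))
        𝒲 (𝓝 (QuotientGroup.mk (a * (γ₁ : G)))) := by
      have hc : Continuous (fun g : G =>
          (QuotientGroup.mk (g * (γ₁ : G)) : G ⧸ (MulAction.stabilizer G p ⊓ Γ))) :=
        continuous_quotient_mk'.comp (continuous_mul_right _)
      exact (hc.tendsto a).comp hWm
    have hfinal : Tendsto (fun z : G × Γ => π₀ z.1) 𝒲
        (𝓝 (QuotientGroup.mk (a * (γ₁ : G)))) :=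
      hq'.congr' (heq.mono fun z hz => hz.symm)
    refine ⟨QuotientGroup.mk (a * (γ₁ : G)), ?_, ?_⟩
    · rw [hρ]
      have h1 : (QuotientGroup.mk (a * (γ₁ : G)) : G ⧸ Γ) = y.1 := by
        rw [← ha]
        refine QuotientGroup.eq.mpr ?_
        simpa [mul_inv_rev, mul_assoc] using Γ.inv_mem γ₁.2
      have h2 : (a * (γ₁ : G)) • p = y.2 := by
        rw [mul_smul, hγ₁', smul_inv_smul]
      rw [h1, h2]
    · intro s hs
      by_contra hns
      have h1 : (fun z : G × Γ => π₀ z.1) ⁻¹' sᶜ ∈ 𝒲 :=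
        hW1 (Ultrafilter.compl_mem_iff_notMem.mpr hns)
      have h2 : (fun z : G × Γ => π₀ z.1) ⁻¹' s ∈ 𝒲 := hfinal hs
      obtain ⟨z, hz1, hz2⟩ := Ultrafilter.nonempty_of_mem (Filter.inter_mem h1 h2)
      exact hz1 hz2
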